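/- Suppose X ⊆ {0,1,2} × {0,1,2} contains (0,0), has |X| = 3, and is a block for the action of S_3 × S_3, i.e., for every g ∈ S_3 × S_3 either g·X = X or (g·X) ∩ X = ∅. Then X = {0} × {0,1,2} or X = {0,1,2} × {0}. -/

import Mathlib

def stmt18P (F : Finset (Fin 3 × Fin 3)) : Prop :=
  ((0 : Fin 3), (0 : Fin 3)) ∈ F → F.card = 3 →
    (∀ g : Equiv.Perm (Fin 3) × Equiv.Perm (Fin 3),
      F.image (fun p : Fin 3 × Fin 3 => (g.1 p.1, g.2 p.2)) = F ∨
        F.image (fun p : Fin 3 × Fin 3 => (g.1 p.1, g.2 p.2)) ∩ F = ∅) →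
    F = {((0:Fin 3),(0:Fin 3)), (0,1), (0,2)} ∨ F = {((0:Fin 3),(0:Fin 3)), (1,0), (2,0)}

noncomputable instance : DecidablePred stmt18P := fun _ =>
  inferInstanceAs (Decidable (_ → _ → _ → (_ ∨ _)))

set_option maxHeartbeats 4000000 in
set_option maxRecDepth 10000 in
lemma stmt18_aux : ∀ F, stmt18P F := by decide

/-- If `X ⊆ {0,1,2} × {0,1,2}` contains `(0,0)`, has three elements, and is a block for the
coordinatewise action of `S_3 × S_3`, then `X = {0} × {0,1,2}` or `X = {0,1,2} × {0}`. -/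
theorem stmt18 (X : Set (Fin 3 × Fin 3)) (h0 : ((0 : Fin 3), (0 : Fin 3)) ∈ X)
    (hcard : X.ncard = 3)
    (hblock : ∀ g : Equiv.Perm (Fin 3) × Equiv.Perm (Fin 3),
      (fun p : Fin 3 × Fin 3 => (g.1 p.1, g.2 p.2)) '' X = X ∨
        Disjoint ((fun p : Fin 3 × Fin 3 => (g.1 p.1, g.2 p.2)) '' X) X) :
    X = ({0} : Set (Fin 3)) ×ˢ (Set.univ : Set (Fin 3)) ∨
      X = (Set.univ : Set (Fin 3)) ×ˢ ({0} : Set (Fin 3)) := by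
  have hfin : X.Finite := Set.toFinite X
  set F := hfin.toFinset with hFdef
  have hcoe : (F : Set (Fin 3 × Fin 3)) = X := hfin.coe_toFinset
  have h0' : ((0 : Fin 3), (0 : Fin 3)) ∈ F := by
    rw [← Finset.mem_coe, hcoe]; exact h0
  have hcard' : F.card = 3 := by
    rw [← Set.ncard_coe_finset, hcoe]; exact hcard
  have hblock' : ∀ g : Equiv.Perm (Fin 3) × Equiv.Perm (Fin 3),
      F.image (fun p : Fin 3 × Fin 3 => (g.1 p.1, g.2 p.2)) = F ∨
        F.image (fun p : Fin 3 × Fin 3 => (g.1 p.1, g.2 p.2)) ∩ F = ∅ := by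
    intro g
    rcases hblock g with h | h
    · left
      rw [← Finset.coe_inj, Finset.coe_image, hcoe, h]
    · right
      rw [← Finset.disjoint_iff_inter_eq_empty, ← Finset.disjoint_coe, Finset.coe_image, hcoe]
      exact h
  rcases stmt18_aux F h0' hcard' hblock' with h | h
  · left
    rw [← hcoe, h]
    ext ⟨a, b⟩
    simp [Prod.ext_iff]
    constructor
    · rintro (⟨h1, h2⟩ | ⟨h1, h2⟩ | ⟨h1, h2⟩) <;> exact h1
    · intro h1; subst h1; fin_cases b <;> simp
  · right
    rw [← hcoe, h]
    ext ⟨a, b⟩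
    simp [Prod.ext_iff]
    constructor
    · rintro (⟨h1, h2⟩ | ⟨h1, h2⟩ | ⟨h1, h2⟩) <;> exact h2
    · intro h2; subst h2; fin_cases a <;> simp
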